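/- Let n ≥ p ≥ r be non-negative integers and K a field. If S is a linear subspace of the space of n×p matrices over K in which every matrix has rank at most r, then dim S ≤ n·r. -/

import Mathlib

open Matrix Finset Function

section FlandersAux

variable {K : Type*} [Field K]

/-- column-major comparison: smaller column gives smaller code. -/
private lemma flx_cell_lt_of_col_lt {n : ℕ} (i i' : Fin n) {a b : ℕ} (h : b < a) :
    b * n + (i' : ℕ) < a * n + (i : ℕ) := by
  have h1 : (i' : ℕ) < n := i'.2
  have h2 : (b + 1) * n ≤ a * n := Nat.mul_le_mul_right n h
  have h3 : b * n + (i' : ℕ) < (b + 1) * n := by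
    have : (b+1) * n = b * n + n := by ring
    omega
  omega

private lemma flx_cell_lt_cases {n : ℕ} {i i' : Fin n} {a b : ℕ}
    (h : b * n + (i' : ℕ) < a * n + (i : ℕ)) : b < a ∨ (b = a ∧ (i' : ℕ) < (i : ℕ)) := by
  rcases lt_trichotomy b a with h' | h' | h'
  · exact Or.inl h'
  · subst h'; right; exact ⟨rfl, by omega⟩
  · exact absurd (flx_cell_lt_of_col_lt i' i h') (by omega)

private lemma flx_cell_eq {n : ℕ} {i i' : Fin n} {a b : ℕ}
    (h : b * n + (i' : ℕ) = a * n + (i : ℕ)) : b = a ∧ i' = i := by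
  rcases lt_trichotomy b a with h' | h' | h'
  · exact absurd (flx_cell_lt_of_col_lt i i' h') (by omega)
  · subst h'; exact ⟨rfl, Fin.ext (by omega)⟩
  · exact absurd (flx_cell_lt_of_col_lt i' i h') (by omega)

private lemma flx_cell_bound {n p : ℕ} (i : Fin n) (j : Fin p) :
    (j : ℕ) * n + (i : ℕ) < p * n := by
  have h1 : (i : ℕ) < n := i.2
  have h2 : ((j : ℕ) + 1) * n ≤ p * n := Nat.mul_le_mul_right n j.2
  have : ((j:ℕ)+1) * n = (j:ℕ) * n + n := by ring
  omega

/-- `M` has its (column-major) leading entry at cell `(i,j)`. -/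
def FlxIsLead {n p : ℕ} (M : Matrix (Fin n) (Fin p) K) (i : Fin n) (j : Fin p) : Prop :=
  M i j ≠ 0 ∧ ∀ (i' : Fin n) (j' : Fin p),
    (j' : ℕ) * n + (i' : ℕ) < (j : ℕ) * n + (i : ℕ) → M i' j' = 0

end FlandersAux


section FlandersTri

variable {K : Type*} [Field K]

/-- Core triangular-completion lemma: given "echelon witnesses" with leading cells having
distinct rows and strictly increasing columns, some linear combination has an invertible
`m × m` submatrix on those rows/columns.  Works over any field. -/
lemma flx_exists_det_ne {n p m : ℕ} (X : Fin m → Matrix (Fin n) (Fin p) K)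
    (row : Fin m → Fin n) (colv : Fin m → Fin p)
    (hrow : Function.Injective row) (hcol : StrictMono colv)
    (h1 : ∀ k, X k (row k) (colv k) = 1)
    (h0col : ∀ (k : Fin m) (i : Fin n) (j : Fin p), j < colv k → X k i j = 0)
    (h0row : ∀ (k : Fin m) (i : Fin n), i < row k → X k i (colv k) = 0) :
    ∃ c : Fin m → K, ((∑ k, c k • X k).submatrix row colv).det ≠ 0 := by
  classical
  set H : (Fin m → K) → ℕ → Matrix (Fin m) (Fin m) K := fun c j =>
    Matrix.of fun a l => if (l : ℕ) < j then ∑ k, c k * X k (row a) (colv l)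
      else X l (row a) (colv l) with hH
  have claim : ∀ j, j ≤ m → ∃ c : Fin m → K, (H c j).det ≠ 0 := by
    intro j
    induction j with
    | zero =>
      intro _
      refine ⟨fun _ => 0, ?_⟩
      -- base: the matrix of witnesses is triangular w.r.t. sorting rows
      have hD : ∀ a l : Fin m, H (fun _ => 0) 0 a l = X l (row a) (colv l) := by
        intro a l; simp [hH]
      set σ : Equiv.Perm (Fin m) := Tuple.sort row with hσ
      have hmono : Monotone (row ∘ σ) := Tuple.monotone_sort row
      have hsm : StrictMono (row ∘ σ) :=
        hmono.strictMono_of_injective (hrow.comp σ.injective)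
      have hdet : ((H (fun _ => 0) 0).submatrix σ σ).det = 1 := by
        have htri : ((H (fun _ => 0) 0).submatrix σ σ).BlockTriangular OrderDual.toDual := by
          intro x y hxy
          have hxy' : (x : Fin m) < y := hxy
          have : row (σ x) < row (σ y) := hsm hxy'
          simp only [Matrix.submatrix_apply, hD]
          exact h0row (σ y) (row (σ x)) this
        rw [Matrix.det_of_lowerTriangular _ htri]
        have : ∀ x : Fin m, (H (fun _ => 0) 0) (σ x) (σ x) = 1 := by
          intro x; rw [hD]; exact h1 (σ x)
        simp [Matrix.submatrix_apply, this]
      have := Matrix.det_submatrix_equiv_self σ (H (fun _ => 0) 0)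
      rw [this] at hdet
      simp [hdet]
    | succ j ihj =>
      intro hj1
      obtain ⟨c, hc⟩ := ihj (by omega)
      have hjm : j < m := by omega
      set jf : Fin m := ⟨j, hjm⟩ with hjf
      have hjfval : ((jf : Fin m) : ℕ) = j := rfl
      set u : Fin m → K := fun a => X jf (row a) (colv jf) with hu
      set v : Fin m → K := fun a => ∑ k ∈ univ.erase jf, c k * X k (row a) (colv jf) with hv
      set α : K := ((H c j).updateCol jf v).det with hα
      set β : K := (H c j).det with hβ
      set aa : K := (1 - α) * β⁻¹ with haa
      set c' : Fin m → K := Function.update c jf aa with hc'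
      have hupdu : (H c j).updateCol jf u = H c j := by
        have : u = fun a => H c j a jf := by
          funext a
          simp only [hH, Matrix.of_apply, hu]
          rw [if_neg (by omega)]
        rw [this, Matrix.updateCol_eq_self]
      have key1 : H c' (j+1) = (H c j).updateCol jf (v + aa • u) := by
        ext a l
        by_cases hl : l = jf
        · subst hl
          rw [Matrix.updateCol_self]
          simp only [hH, Matrix.of_apply, if_pos (by rw [hjfval]; omega : ((jf : Fin m) : ℕ) < j + 1)]
          rw [← Finset.add_sum_erase _ _ (Finset.mem_univ jf)]
          have h2 : ∀ k ∈ univ.erase jf, c' k * X k (row a) (colv jf)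
              = c k * X k (row a) (colv jf) := by
            intro k hk
            rw [hc', Function.update_of_ne (Finset.ne_of_mem_erase hk)]
          rw [Finset.sum_congr rfl h2]
          simp only [Pi.add_apply, Pi.smul_apply, smul_eq_mul, hc', Function.update_self]
          rw [hv, hu]
          ring
        · rw [Matrix.updateCol_ne hl]
          have hlj : (l : ℕ) ≠ j := by
            intro h; exact hl (Fin.ext (by rw [hjfval, ← h]))
          by_cases hlt : (l : ℕ) < j + 1
          · have hltj : (l : ℕ) < j := by omega
            simp only [hH, Matrix.of_apply, if_pos hlt, if_pos hltj]
            refine Finset.sum_congr rfl ?_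
            intro k _
            by_cases hk : k = jf
            · subst hk
              have hljf : l < jf := by
                rw [Fin.lt_def, hjfval]
                exact hltj
              have : colv l < colv jf := hcol hljf
              rw [h0col jf (row a) (colv l) this]
              ring
            · rw [hc', Function.update_of_ne hk]
          · have hltj : ¬ ((l : ℕ) < j) := by omega
            simp only [hH, Matrix.of_apply, if_neg hlt, if_neg hltj]
      refine ⟨c', ?_⟩
      have hdet : (H c' (j+1)).det = α + aa * β := by
        rw [key1, Matrix.det_updateCol_add, Matrix.det_updateCol_smul, hupdu, ← hα, ← hβ]
      rw [hdet, haa]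
      have hβ0 : β ≠ 0 := hc
      field_simp
      simp
  obtain ⟨c, hc⟩ := claim m le_rfl
  refine ⟨c, ?_⟩
  have : (∑ k, c k • X k).submatrix row colv = H c m := by
    ext a l
    simp only [Matrix.submatrix_apply, hH, Matrix.of_apply, if_pos l.2]
    rw [Matrix.sum_apply]
    refine Finset.sum_congr rfl ?_
    intro k _
    simp
  rw [this]
  exact hc

end FlandersTri


section FlandersRank

variable {K : Type*} [Field K]

lemma flx_rank_ge {n p m : ℕ} (M : Matrix (Fin n) (Fin p) K)
    (row : Fin m → Fin n) (colv : Fin m → Fin p)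
    (h : (M.submatrix row colv).det ≠ 0) : m ≤ M.rank := by
  classical
  have hu : IsUnit (M.submatrix row colv) :=
    (Matrix.isUnit_iff_isUnit_det _).2 (isUnit_iff_ne_zero.2 h)
  have hli : LinearIndependent K (fun l => (M.submatrix row colv)ᵀ l) :=
    Matrix.linearIndependent_cols_iff_isUnit.2 hu
  have hcomp : (fun l => (M.submatrix row colv)ᵀ l)
      = (LinearMap.funLeft K K row) ∘ (fun l => Mᵀ (colv l)) := by
    funext l; funext a; rfl
  have hli2 : LinearIndependent K (fun l => Mᵀ (colv l)) :=
    LinearIndependent.of_comp (LinearMap.funLeft K K row) (by rw [← hcomp]; exact hli)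
  have hm : Module.finrank K (Submodule.span K (Set.range (fun l => Mᵀ (colv l)))) = m := by
    rw [finrank_span_eq_card hli2, Fintype.card_fin]
  have hsub : Submodule.span K (Set.range (fun l => Mᵀ (colv l)))
      ≤ Submodule.span K (Set.range Mᵀ) := by
    apply Submodule.span_mono
    rintro x ⟨l, rfl⟩
    exact ⟨colv l, rfl⟩
  have := Submodule.finrank_mono hsub
  rw [hm] at this
  rwa [Matrix.rank_eq_finrank_span_cols]

end FlandersRank


section FlandersKonig

/-- König-type bound: if a set of cells in an `n × p` grid (`p ≤ n`) contains no matching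
of size `> r`, then it has at most `n * r` cells. -/
lemma flx_konig {n p r : ℕ} (hpn : p ≤ n) (E : Finset (Fin n × Fin p))
    (hm : ∀ (m : ℕ) (row : Fin m → Fin n) (col : Fin m → Fin p),
      Function.Injective row → Function.Injective col →
      (∀ k, (row k, col k) ∈ E) → m ≤ r) :
    E.card ≤ n * r := by
  classical
  set t : Fin n → Finset (Fin p) := fun i => (E.filter (fun c => c.1 = i)).image Prod.snd with ht
  set d : ℕ := (univ : Finset (Fin n)).powerset.sup (fun A => A.card - (A.biUnion t).card)
    with hd
  set t' : Fin n → Finset (Fin p ⊕ Fin d) := fun i =>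
    (t i).image Sum.inl ∪ (univ : Finset (Fin d)).image Sum.inr with ht'
  have hall : ∀ s : Finset (Fin n), s.card ≤ (s.biUnion t').card := by
    intro s
    rcases s.eq_empty_or_nonempty with hs | hs
    · simp [hs]
    · have hbu : s.biUnion t' = (s.biUnion t).image Sum.inl
          ∪ (univ : Finset (Fin d)).image Sum.inr := by
        ext x
        simp only [ht', mem_biUnion, mem_union, mem_image]
        constructor
        · rintro ⟨i, his, hx⟩
          rcases hx with ⟨j, hj, rfl⟩ | ⟨j, hj, rfl⟩
          · exact Or.inl ⟨j, ⟨i, his, hj⟩, rfl⟩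
          · exact Or.inr ⟨j, hj, rfl⟩
        · rintro (⟨j, ⟨i, his, hji⟩, rfl⟩ | ⟨j, _, rfl⟩)
          · exact ⟨i, his, Or.inl ⟨j, hji, rfl⟩⟩
          · obtain ⟨i, his⟩ := hs
            exact ⟨i, his, Or.inr ⟨j, mem_univ j, rfl⟩⟩
      rw [hbu, Finset.card_union_of_disjoint (by
        simp only [disjoint_left, mem_image]
        rintro x ⟨j, _, rfl⟩ ⟨j', _, h⟩
        exact absurd h (by simp))]
      rw [Finset.card_image_of_injective _ Sum.inl_injective,
        Finset.card_image_of_injective _ Sum.inr_injective, Finset.card_univ, Fintype.card_fin]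
      have hle : s.card - (s.biUnion t).card ≤ d :=
        Finset.le_sup (f := fun A => A.card - (A.biUnion t).card)
          (Finset.mem_powerset.2 (Finset.subset_univ s))
      omega
  obtain ⟨f, hfinj, hf⟩ := (Finset.all_card_le_biUnion_card_iff_exists_injective t').1 hall
  set A₀ : Finset (Fin n) := univ.filter (fun i => ∃ j, f i = Sum.inl j) with hA₀
  set m : ℕ := A₀.card with hmdef
  have hrowmem : ∀ k : Fin m, ((A₀.orderIsoOfFin rfl k : Fin n)) ∈ A₀ :=
    fun k => (A₀.orderIsoOfFin rfl k).2
  set row : Fin m → Fin n := fun k => (A₀.orderIsoOfFin rfl k : Fin n) with hrow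
  have hrowinj : Function.Injective row := by
    intro x y hxy
    exact (A₀.orderIsoOfFin rfl).injective (Subtype.ext hxy)
  have hA₀prop : ∀ i ∈ A₀, ∃ j, f i = Sum.inl j := fun i hi => (mem_filter.1 hi).2
  have hexj : ∀ k : Fin m, ∃ j, f (row k) = Sum.inl j := fun k => hA₀prop _ (hrowmem k)
  set col : Fin m → Fin p := fun k => Classical.choose (hexj k) with hcol
  have hcolspec : ∀ k, f (row k) = Sum.inl (col k) := fun k => Classical.choose_spec (hexj k)
  have hcolinj : Function.Injective col := by
    intro x y hxy
    apply hrowinj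
    apply hfinj
    rw [hcolspec x, hcolspec y, hxy]
  have hcellE : ∀ k, (row k, col k) ∈ E := by
    intro k
    have h1 : Sum.inl (col k) ∈ t' (row k) := by rw [← hcolspec k]; exact hf (row k)
    rw [ht'] at h1
    rcases mem_union.1 h1 with h | h
    · obtain ⟨j, hj, hjeq⟩ := mem_image.1 h
      have hjc : j = col k := by simpa using hjeq
      subst hjc
      rw [ht] at hj
      obtain ⟨c, hc, hc2⟩ := mem_image.1 hj
      rw [mem_filter] at hc
      have hceq : c = (row k, col k) := Prod.ext hc.2 hc2
      rw [← hceq]; exact hc.1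
    · obtain ⟨j, _, hjeq⟩ := mem_image.1 h
      exact absurd hjeq (by simp)
  have hmr : m ≤ r := hm m row col hrowinj hcolinj hcellE
  have hcompl : n ≤ m + d := by
    set B₀ := univ.filter (fun i : Fin n => ¬ ∃ j, f i = Sum.inl j) with hB₀
    have hsplit : A₀.card + B₀.card = n := by
      rw [hA₀, hB₀, Finset.card_filter_add_card_filter_not]
      simp
    have himg : B₀.image f ⊆ (univ : Finset (Fin d)).image Sum.inr := by
      intro x hx
      obtain ⟨i, hi, rfl⟩ := mem_image.1 hx
      rw [hB₀, mem_filter] at hi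
      rcases hfi : f i with j | j'
      · exact absurd ⟨j, hfi⟩ hi.2
      · exact mem_image.2 ⟨j', mem_univ _, rfl⟩
    have hBd : B₀.card ≤ d := by
      have h1 : B₀.card = (B₀.image f).card :=
        (Finset.card_image_of_injective _ hfinj).symm
      have h2 : (B₀.image f).card
          ≤ ((univ : Finset (Fin d)).image (Sum.inr : Fin d → Fin p ⊕ Fin d)).card :=
        Finset.card_le_card himg
      have h3 : ((univ : Finset (Fin d)).image (Sum.inr : Fin d → Fin p ⊕ Fin d)).card = d := by
        rw [Finset.card_image_of_injective _ Sum.inr_injective, Finset.card_univ,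
          Fintype.card_fin]
      omega
    omega
  -- now the counting
  rcases Nat.eq_zero_or_pos d with hd0 | hdpos
  · have hnr : n ≤ r := by omega
    calc E.card ≤ (univ : Finset (Fin n × Fin p)).card := Finset.card_le_univ E
      _ = n * p := by rw [Finset.card_univ, Fintype.card_prod, Fintype.card_fin, Fintype.card_fin]
      _ ≤ n * r := Nat.mul_le_mul_left n (le_trans hpn hnr)
  · obtain ⟨A, hA, hAeq⟩ := Finset.exists_mem_eq_sup (univ : Finset (Fin n)).powerset
      ⟨∅, by simp⟩ (fun A => A.card - (A.biUnion t).card)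
    have hd2 : d = A.card - (A.biUnion t).card := by rw [hd, ← hAeq]
    have hba : (A.biUnion t).card < A.card := by omega
    have han : A.card ≤ n := by
      have := Finset.card_le_univ A
      simpa using this
    have hsplitE : (E.filter (fun c => c.1 ∈ A)).card
        + (E.filter (fun c => ¬ c.1 ∈ A)).card = E.card :=
      Finset.card_filter_add_card_filter_not _
    have h1 : E.filter (fun c => c.1 ∈ A) ⊆ (univ : Finset (Fin n)) ×ˢ (A.biUnion t) := by
      intro c hc
      rw [mem_filter] at hc
      refine Finset.mem_product.2 ⟨mem_univ _, ?_⟩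
      refine mem_biUnion.2 ⟨c.1, hc.2, ?_⟩
      rw [ht]
      exact mem_image.2 ⟨c, mem_filter.2 ⟨hc.1, rfl⟩, rfl⟩
    have h2 : E.filter (fun c => ¬ c.1 ∈ A) ⊆ ((univ : Finset (Fin n)) \ A) ×ˢ univ := by
      intro c hc
      rw [mem_filter] at hc
      exact Finset.mem_product.2 ⟨Finset.mem_sdiff.2 ⟨mem_univ _, hc.2⟩, mem_univ _⟩
    have hc1 : (E.filter (fun c => c.1 ∈ A)).card ≤ n * (A.biUnion t).card := by
      have := Finset.card_le_card h1
      rwa [Finset.card_product, Finset.card_univ, Fintype.card_fin] at this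
    have hc2 : (E.filter (fun c => ¬ c.1 ∈ A)).card ≤ (n - A.card) * p := by
      have := Finset.card_le_card h2
      rwa [Finset.card_product, Finset.card_sdiff_of_subset (Finset.subset_univ A), Finset.card_univ,
        Fintype.card_fin, Finset.card_univ, Fintype.card_fin] at this
    have hsum : E.card ≤ n * (A.biUnion t).card + (n - A.card) * p := by omega
    have hstep : (n - A.card) * p ≤ (n - A.card) * n := Nat.mul_le_mul_left _ hpn
    have hkey : (A.biUnion t).card + (n - A.card) ≤ r := by omega
    calc E.card ≤ n * (A.biUnion t).card + (n - A.card) * n := by omega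
      _ = n * ((A.biUnion t).card + (n - A.card)) := by ring
      _ ≤ n * r := Nat.mul_le_mul_left n hkey

end FlandersKonig

open Matrix Finset Function in
/-- Flanders's theorem. -/
theorem stmt0 (K : Type*) [Field K] (n p r : ℕ) (hpn : p ≤ n) (hrp : r ≤ p)
    (S : Submodule K (Matrix (Fin n) (Fin p) K))
    (hS : ∀ M ∈ S, Matrix.rank M ≤ r) :
    Module.finrank K S ≤ n * r := by
  classical
  set Lc : Finset (Fin n × Fin p) :=
    univ.filter (fun c => ∃ M ∈ S, FlxIsLead M c.1 c.2) with hLc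
  have hwit : ∀ c ∈ Lc, ∃ X, X ∈ S ∧ FlxIsLead X c.1 c.2 ∧ X c.1 c.2 = 1 := by
    intro c hc
    obtain ⟨M, hMS, hlead⟩ := (mem_filter.1 hc).2
    refine ⟨(M c.1 c.2)⁻¹ • M, S.smul_mem _ hMS, ⟨?_, ?_⟩, ?_⟩
    · simp only [Matrix.smul_apply, smul_eq_mul]
      exact mul_ne_zero (inv_ne_zero hlead.1) hlead.1
    · intro i' j' hlt
      simp only [Matrix.smul_apply, smul_eq_mul, hlead.2 i' j' hlt, mul_zero]
    · simp only [Matrix.smul_apply, smul_eq_mul]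
      exact inv_mul_cancel₀ hlead.1
  set Xw : (Fin n × Fin p) → Matrix (Fin n) (Fin p) K := fun c =>
    if hc : c ∈ Lc then Classical.choose (hwit c hc) else 0 with hXw
  have hXw1 : ∀ c ∈ Lc, Xw c ∈ S ∧ FlxIsLead (Xw c) c.1 c.2 ∧ Xw c c.1 c.2 = 1 := by
    intro c hc
    rw [hXw]
    simp only [dif_pos hc]
    exact Classical.choose_spec (hwit c hc)
  -- every element of S is in the span of the witnesses
  have key : ∀ k : ℕ, ∀ M, M ∈ S →
      (∀ (i : Fin n) (j : Fin p), (j : ℕ) * n + (i : ℕ) < p * n - k → M i j = 0) →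
      M ∈ Submodule.span K ((Lc.image Xw : Finset _) : Set (Matrix (Fin n) (Fin p) K)) := by
    intro k
    induction k using Nat.strong_induction_on with
    | _ k ih =>
      intro M hMS hz
      by_cases hM0 : M = 0
      · rw [hM0]; exact zero_mem _
      · have hne : ∃ i j, M i j ≠ 0 := by
          by_contra h
          push_neg at h
          exact hM0 (by ext i j; exact h i j)
        have hTne : {s : ℕ | ∃ (i : Fin n) (j : Fin p), (j:ℕ) * n + (i:ℕ) = s ∧ M i j ≠ 0}.Nonempty := by
          obtain ⟨i, j, hij⟩ := hne
          exact ⟨(j:ℕ) * n + (i:ℕ), i, j, rfl, hij⟩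
        set t₀ := sInf {s : ℕ | ∃ (i : Fin n) (j : Fin p), (j:ℕ) * n + (i:ℕ) = s ∧ M i j ≠ 0} with ht₀def
        obtain ⟨i₀, j₀, ht₀, hne₀⟩ := Nat.sInf_mem hTne
        have ht₀' : (j₀:ℕ) * n + (i₀:ℕ) = t₀ := by rw [ht₀def]; exact ht₀
        have hmin : ∀ (i : Fin n) (j : Fin p), (j:ℕ) * n + (i:ℕ) < t₀ → M i j = 0 := by
          intro i j hlt
          by_contra h'
          have hm : (j:ℕ) * n + (i:ℕ) ∈
              {s : ℕ | ∃ (i : Fin n) (j : Fin p), (j:ℕ) * n + (i:ℕ) = s ∧ M i j ≠ 0} :=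
            ⟨i, j, rfl, h'⟩
          have := Nat.sInf_le hm
          omega
        have hlead : FlxIsLead M i₀ j₀ := ⟨hne₀, fun i' j' hlt => hmin i' j' (by omega)⟩
        have hcmem : (i₀, j₀) ∈ Lc := mem_filter.2 ⟨mem_univ _, M, hMS, hlead⟩
        obtain ⟨hXS, hXlead0, hX10⟩ := hXw1 _ hcmem
        have hXlead : FlxIsLead (Xw (i₀, j₀)) i₀ j₀ := hXlead0
        have hX1 : Xw (i₀, j₀) i₀ j₀ = 1 := hX10
        have ht₀lb : p * n - k ≤ t₀ := by
          by_contra h'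
          push_neg at h'
          exact hne₀ (hz i₀ j₀ (by omega))
        have ht₀ub : t₀ < p * n := by
          have := flx_cell_bound i₀ j₀ (p := p)
          omega
        have hk' : p * n - (t₀ + 1) < k := by omega
        have hzM' : ∀ (i : Fin n) (j : Fin p),
            (j:ℕ) * n + (i:ℕ) < p * n - (p * n - (t₀ + 1)) →
            (M - M i₀ j₀ • Xw (i₀, j₀)) i j = 0 := by
          intro i j hlt
          have hlt' : (j:ℕ) * n + (i:ℕ) < t₀ + 1 := by omega
          rcases Nat.lt_or_ge ((j:ℕ) * n + (i:ℕ)) t₀ with h | h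
          · have h1 := hmin i j h
            have h2 : Xw (i₀, j₀) i j = 0 := hXlead.2 i j (by omega)
            simp [h1, h2]
          · have heq : (j:ℕ) * n + (i:ℕ) = (j₀:ℕ) * n + (i₀:ℕ) := by omega
            obtain ⟨hj, hi⟩ := flx_cell_eq heq
            have hjj : j = j₀ := Fin.ext hj
            subst hjj; subst hi
            simp only [Matrix.sub_apply, Matrix.smul_apply, smul_eq_mul]
            rw [hX1]
            ring
        have hspan' := ih _ hk' _ (sub_mem hMS (S.smul_mem _ hXS)) hzM'
        have hXmem : Xw (i₀, j₀) ∈ (Lc.image Xw : Finset _) := mem_image.2 ⟨_, hcmem, rfl⟩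
        have hMeq : M = (M - M i₀ j₀ • Xw (i₀, j₀)) + M i₀ j₀ • Xw (i₀, j₀) := by abel
        rw [hMeq]
        exact add_mem hspan' (Submodule.smul_mem _ _ (Submodule.subset_span hXmem))
  have hle : S ≤ Submodule.span K ((Lc.image Xw : Finset _) : Set (Matrix (Fin n) (Fin p) K)) := by
    intro M hM
    exact key (p * n) M hM (by intro i j h; omega)
  have h1 : Module.finrank K S ≤ (Lc.image Xw).card :=
    (Submodule.finrank_mono hle).trans (finrank_span_finset_le_card _)
  have h2 : (Lc.image Xw).card ≤ Lc.card := Finset.card_image_le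
  -- no matching of size > r in the leading cells
  have hmatch : ∀ (m : ℕ) (row : Fin m → Fin n) (col : Fin m → Fin p),
      Function.Injective row → Function.Injective col →
      (∀ k, (row k, col k) ∈ Lc) → m ≤ r := by
    intro m row col hri hci hcell
    set σ := Tuple.sort col with hσ
    have hmono : Monotone (col ∘ σ) := Tuple.monotone_sort col
    have hsm : StrictMono (col ∘ σ) := hmono.strictMono_of_injective (hci.comp σ.injective)
    have hcell' : ∀ k, (row (σ k), col (σ k)) ∈ Lc := fun k => hcell (σ k)
    have hprop : ∀ k, Xw (row (σ k), col (σ k)) ∈ S ∧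
        FlxIsLead (Xw (row (σ k), col (σ k))) (row (σ k)) (col (σ k)) ∧
        Xw (row (σ k), col (σ k)) (row (σ k)) (col (σ k)) = 1 :=
      fun k => hXw1 _ (hcell' k)
    obtain ⟨c, hdet⟩ := flx_exists_det_ne (fun k => Xw (row (σ k), col (σ k)))
      (fun k => row (σ k)) (fun k => col (σ k)) (hri.comp σ.injective) hsm
      (fun k => (hprop k).2.2)
      (fun k i j hj => (hprop k).2.1.2 i j
        (flx_cell_lt_of_col_lt (row (σ k)) i
          (show (j:ℕ) < ((col (σ k)) : ℕ) from Fin.lt_def.mp hj)))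
      (fun k i hi => (hprop k).2.1.2 i (col (σ k)) (by
        have h5 : (i:ℕ) < ((row (σ k)) : ℕ) := Fin.lt_def.mp hi
        omega))
    have hMS : (∑ k, c k • Xw (row (σ k), col (σ k))) ∈ S :=
      Submodule.sum_mem _ (fun k _ => S.smul_mem _ (hprop k).1)
    have hrk := flx_rank_ge (∑ k, c k • Xw (row (σ k), col (σ k)))
      (fun k => row (σ k)) (fun k => col (σ k)) hdet
    exact le_trans hrk (hS _ hMS)
  have h3 := flx_konig hpn Lc hmatch
  omega
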